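/- For s ∈ {1,…,5}, let [f]^s denote the elementary symmetric polynomial of degree s in the five real variables f₁,…,f₅, and define f_out(f₁,…,f₅) = ([f]³ − 2[f]⁵)/(3 + [f]⁴). Then f_out is monotone nondecreasing in each variable on the cube [0,1]⁵: if (f₁,…,f₅) and (g₁,…,g₅) lie in [0,1]⁵ with fᵢ ≤ gᵢ for every i, then f_out(f₁,…,f₅) ≤ f_out(g₁,…,g₅). -/

import Mathlib

/-- The elementary symmetric polynomial of degree `s` in five variables. -/
noncomputable def esym5 (s : ℕ) (f : Fin 5 → ℝ) : ℝ :=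
  ∑ S ∈ Finset.univ.powersetCard s, ∏ i ∈ S, f i

/-- Output fidelity parameter of the five-qubit-code distillation procedure. -/
noncomputable def fOut (f : Fin 5 → ℝ) : ℝ :=
  (esym5 3 f - 2 * esym5 5 f) / (3 + esym5 4 f)

lemma esym5_eval_3 (h : Fin 5 → ℝ) : esym5 3 h = h 0 * h 1 * h 2 + h 0 * h 1 * h 3 + h 0 * h 1 * h 4 + h 0 * h 2 * h 3 + h 0 * h 2 * h 4 + h 0 * h 3 * h 4 + h 1 * h 2 * h 3 + h 1 * h 2 * h 4 + h 1 * h 3 * h 4 + h 2 * h 3 * h 4 := by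
  rw [esym5]
  rw [show (Finset.univ.powersetCard 3 : Finset (Finset (Fin 5))) = {({0,1,2} : Finset (Fin 5)), ({0,1,3} : Finset (Fin 5)), ({0,1,4} : Finset (Fin 5)), ({0,2,3} : Finset (Fin 5)), ({0,2,4} : Finset (Fin 5)), ({0,3,4} : Finset (Fin 5)), ({1,2,3} : Finset (Fin 5)), ({1,2,4} : Finset (Fin 5)), ({1,3,4} : Finset (Fin 5)), ({2,3,4} : Finset (Fin 5))} from by decide]
  simp (config := { decide := true }) [Finset.sum_insert, Finset.prod_insert, Fin.prod_univ_five]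
  try ring
lemma esym5_eval_4 (h : Fin 5 → ℝ) : esym5 4 h = h 0 * h 1 * h 2 * h 3 + h 0 * h 1 * h 2 * h 4 + h 0 * h 1 * h 3 * h 4 + h 0 * h 2 * h 3 * h 4 + h 1 * h 2 * h 3 * h 4 := by
  rw [esym5]
  rw [show (Finset.univ.powersetCard 4 : Finset (Finset (Fin 5))) = {({0,1,2,3} : Finset (Fin 5)), ({0,1,2,4} : Finset (Fin 5)), ({0,1,3,4} : Finset (Fin 5)), ({0,2,3,4} : Finset (Fin 5)), ({1,2,3,4} : Finset (Fin 5))} from by decide]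
  simp (config := { decide := true }) [Finset.sum_insert, Finset.prod_insert, Fin.prod_univ_five]
  try ring
lemma esym5_eval_5 (h : Fin 5 → ℝ) : esym5 5 h = h 0 * h 1 * h 2 * h 3 * h 4 := by
  rw [esym5]
  rw [show (Finset.univ.powersetCard 5 : Finset (Finset (Fin 5))) = {({0,1,2,3,4} : Finset (Fin 5))} from by decide]
  simp (config := { decide := true }) [Finset.sum_insert, Finset.prod_insert, Fin.prod_univ_five]
  try ring

lemma fOut_apply (h : Fin 5 → ℝ) : fOut h =
    (h 0 * h 1 * h 2 + h 0 * h 1 * h 3 + h 0 * h 1 * h 4 + h 0 * h 2 * h 3 + h 0 * h 2 * h 4 +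
        h 0 * h 3 * h 4 + h 1 * h 2 * h 3 + h 1 * h 2 * h 4 + h 1 * h 3 * h 4 + h 2 * h 3 * h 4
      - 2 * (h 0 * h 1 * h 2 * h 3 * h 4)) /
    (3 + (h 0 * h 1 * h 2 * h 3 + h 0 * h 1 * h 2 * h 4 + h 0 * h 1 * h 3 * h 4 +
        h 0 * h 2 * h 3 * h 4 + h 1 * h 2 * h 3 * h 4)) := by
  rw [fOut, esym5_eval_3, esym5_eval_4, esym5_eval_5]

lemma key (a b c d : ℝ) (pa : 0 ≤ a) (ma : 0 ≤ 1 - a) (pb : 0 ≤ b) (mb : 0 ≤ 1 - b)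
    (pc : 0 ≤ c) (mc : 0 ≤ 1 - c) (pd : 0 ≤ d) (md : 0 ≤ 1 - d) :
    0 ≤ (a*b+a*c+a*d+b*c+b*d+c*d - 2*(a*b*c*d)) * (3 + a*b*c*d)
      - (a*b*c+a*b*d+a*c*d+b*c*d) * (a*b*c+a*b*d+a*c*d+b*c*d) := by
  have ht0 : 0 ≤ (1:ℝ) * a * (1 - a) * c * c * d * d := (mul_nonneg (mul_nonneg (mul_nonneg (mul_nonneg (mul_nonneg (mul_nonneg (by norm_num : (0:ℝ) ≤ 1) pa) ma) pc) pc) pd) pd)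
  have ht1 : 0 ≤ (1:ℝ) * a * (1 - a) * b * c * d * d := (mul_nonneg (mul_nonneg (mul_nonneg (mul_nonneg (mul_nonneg (mul_nonneg (by norm_num : (0:ℝ) ≤ 1) pa) ma) pb) pc) pd) pd)
  have ht2 : 0 ≤ (1:ℝ) * a * (1 - a) * b * c * c * d := (mul_nonneg (mul_nonneg (mul_nonneg (mul_nonneg (mul_nonneg (mul_nonneg (by norm_num : (0:ℝ) ≤ 1) pa) ma) pb) pc) pc) pd)
  have ht3 : 0 ≤ (1:ℝ) * a * (1 - a) * b * b * d * d := (mul_nonneg (mul_nonneg (mul_nonneg (mul_nonneg (mul_nonneg (mul_nonneg (by norm_num : (0:ℝ) ≤ 1) pa) ma) pb) pb) pd) pd)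
  have ht4 : 0 ≤ (1:ℝ) * a * (1 - a) * b * b * c * d := (mul_nonneg (mul_nonneg (mul_nonneg (mul_nonneg (mul_nonneg (mul_nonneg (by norm_num : (0:ℝ) ≤ 1) pa) ma) pb) pb) pc) pd)
  have ht5 : 0 ≤ (1:ℝ) * a * (1 - a) * b * b * c * c := (mul_nonneg (mul_nonneg (mul_nonneg (mul_nonneg (mul_nonneg (mul_nonneg (by norm_num : (0:ℝ) ≤ 1) pa) ma) pb) pb) pc) pc)
  have ht6 : 0 ≤ (2:ℝ) * a * (1 - a) * b * b * c * c * d * d := (mul_nonneg (mul_nonneg (mul_nonneg (mul_nonneg (mul_nonneg (mul_nonneg (mul_nonneg (mul_nonneg (by norm_num : (0:ℝ) ≤ 2) pa) ma) pb) pb) pc) pc) pd) pd)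
  have ht7 : 0 ≤ (1:ℝ) * (1 - a) * b * (1 - b) * c * c * d * d := (mul_nonneg (mul_nonneg (mul_nonneg (mul_nonneg (mul_nonneg (mul_nonneg (mul_nonneg (by norm_num : (0:ℝ) ≤ 1) ma) pb) mb) pc) pc) pd) pd)
  have ht8 : 0 ≤ (3:ℝ) * (1 - a) * (1 - b) * c * d := (mul_nonneg (mul_nonneg (mul_nonneg (mul_nonneg (by norm_num : (0:ℝ) ≤ 3) ma) mb) pc) pd)
  have ht9 : 0 ≤ (1:ℝ) * (1 - a) * b * c * (1 - c) * d * d := (mul_nonneg (mul_nonneg (mul_nonneg (mul_nonneg (mul_nonneg (mul_nonneg (by norm_num : (0:ℝ) ≤ 1) ma) pb) pc) mc) pd) pd)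
  have ht10 : 0 ≤ (3:ℝ) * (1 - a) * b * (1 - c) * d := (mul_nonneg (mul_nonneg (mul_nonneg (mul_nonneg (by norm_num : (0:ℝ) ≤ 3) ma) pb) mc) pd)
  have ht11 : 0 ≤ (1:ℝ) * (1 - a) * b * c * d * (1 - d) := (mul_nonneg (mul_nonneg (mul_nonneg (mul_nonneg (mul_nonneg (by norm_num : (0:ℝ) ≤ 1) ma) pb) pc) pd) md)
  have ht12 : 0 ≤ (3:ℝ) * (1 - a) * b * c * (1 - d) := (mul_nonneg (mul_nonneg (mul_nonneg (mul_nonneg (by norm_num : (0:ℝ) ≤ 3) ma) pb) pc) md)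
  have ht13 : 0 ≤ (8:ℝ) * (1 - a) * b * c * d := (mul_nonneg (mul_nonneg (mul_nonneg (mul_nonneg (by norm_num : (0:ℝ) ≤ 8) ma) pb) pc) pd)
  have ht14 : 0 ≤ (1:ℝ) * a * b * (1 - b) * d * d := (mul_nonneg (mul_nonneg (mul_nonneg (mul_nonneg (mul_nonneg (by norm_num : (0:ℝ) ≤ 1) pa) pb) mb) pd) pd)
  have ht15 : 0 ≤ (1:ℝ) * a * b * (1 - b) * c * d := (mul_nonneg (mul_nonneg (mul_nonneg (mul_nonneg (mul_nonneg (by norm_num : (0:ℝ) ≤ 1) pa) pb) mb) pc) pd)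
  have ht16 : 0 ≤ (1:ℝ) * a * b * (1 - b) * c * d * d := (mul_nonneg (mul_nonneg (mul_nonneg (mul_nonneg (mul_nonneg (mul_nonneg (by norm_num : (0:ℝ) ≤ 1) pa) pb) mb) pc) pd) pd)
  have ht17 : 0 ≤ (1:ℝ) * a * b * (1 - b) * c * c := (mul_nonneg (mul_nonneg (mul_nonneg (mul_nonneg (mul_nonneg (by norm_num : (0:ℝ) ≤ 1) pa) pb) mb) pc) pc)
  have ht18 : 0 ≤ (1:ℝ) * a * b * (1 - b) * c * c * d := (mul_nonneg (mul_nonneg (mul_nonneg (mul_nonneg (mul_nonneg (mul_nonneg (by norm_num : (0:ℝ) ≤ 1) pa) pb) mb) pc) pc) pd)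
  have ht19 : 0 ≤ (3:ℝ) * a * b * (1 - b) * c * c * d * d := (mul_nonneg (mul_nonneg (mul_nonneg (mul_nonneg (mul_nonneg (mul_nonneg (mul_nonneg (by norm_num : (0:ℝ) ≤ 3) pa) pb) mb) pc) pc) pd) pd)
  have ht20 : 0 ≤ (1:ℝ) * a * (1 - b) * c * (1 - c) * d * d := (mul_nonneg (mul_nonneg (mul_nonneg (mul_nonneg (mul_nonneg (mul_nonneg (by norm_num : (0:ℝ) ≤ 1) pa) mb) pc) mc) pd) pd)
  have ht21 : 0 ≤ (3:ℝ) * a * (1 - b) * (1 - c) * d := (mul_nonneg (mul_nonneg (mul_nonneg (mul_nonneg (by norm_num : (0:ℝ) ≤ 3) pa) mb) mc) pd)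
  have ht22 : 0 ≤ (1:ℝ) * a * (1 - b) * c * d * (1 - d) := (mul_nonneg (mul_nonneg (mul_nonneg (mul_nonneg (mul_nonneg (by norm_num : (0:ℝ) ≤ 1) pa) mb) pc) pd) md)
  have ht23 : 0 ≤ (3:ℝ) * a * (1 - b) * c * (1 - d) := (mul_nonneg (mul_nonneg (mul_nonneg (mul_nonneg (by norm_num : (0:ℝ) ≤ 3) pa) mb) pc) md)
  have ht24 : 0 ≤ (8:ℝ) * a * (1 - b) * c * d := (mul_nonneg (mul_nonneg (mul_nonneg (mul_nonneg (by norm_num : (0:ℝ) ≤ 8) pa) mb) pc) pd)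
  have ht25 : 0 ≤ (1:ℝ) * a * b * c * (1 - c) := (mul_nonneg (mul_nonneg (mul_nonneg (mul_nonneg (by norm_num : (0:ℝ) ≤ 1) pa) pb) pc) mc)
  have ht26 : 0 ≤ (2:ℝ) * a * b * c * (1 - c) * d := (mul_nonneg (mul_nonneg (mul_nonneg (mul_nonneg (mul_nonneg (by norm_num : (0:ℝ) ≤ 2) pa) pb) pc) mc) pd)
  have ht27 : 0 ≤ (5:ℝ) * a * b * c * (1 - c) * d * d := (mul_nonneg (mul_nonneg (mul_nonneg (mul_nonneg (mul_nonneg (mul_nonneg (by norm_num : (0:ℝ) ≤ 5) pa) pb) pc) mc) pd) pd)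
  have ht28 : 0 ≤ (1:ℝ) * a * b * (1 - c) * d * (1 - d) := (mul_nonneg (mul_nonneg (mul_nonneg (mul_nonneg (mul_nonneg (by norm_num : (0:ℝ) ≤ 1) pa) pb) mc) pd) md)
  have ht29 : 0 ≤ (3:ℝ) * a * b * (1 - c) * (1 - d) := (mul_nonneg (mul_nonneg (mul_nonneg (mul_nonneg (by norm_num : (0:ℝ) ≤ 3) pa) pb) mc) md)
  have ht30 : 0 ≤ (8:ℝ) * a * b * (1 - c) * d := (mul_nonneg (mul_nonneg (mul_nonneg (mul_nonneg (by norm_num : (0:ℝ) ≤ 8) pa) pb) mc) pd)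
  have ht31 : 0 ≤ (8:ℝ) * a * b * c * d * (1 - d) := (mul_nonneg (mul_nonneg (mul_nonneg (mul_nonneg (mul_nonneg (by norm_num : (0:ℝ) ≤ 8) pa) pb) pc) pd) md)
  have ht32 : 0 ≤ (8:ℝ) * a * b * c * (1 - d) := (mul_nonneg (mul_nonneg (mul_nonneg (mul_nonneg (by norm_num : (0:ℝ) ≤ 8) pa) pb) pc) md)
  linarith [ht0, ht1, ht2, ht3, ht4, ht5, ht6, ht7, ht8, ht9, ht10, ht11, ht12, ht13, ht14, ht15, ht16, ht17, ht18, ht19, ht20, ht21, ht22, ht23, ht24, ht25, ht26, ht27, ht28, ht29, ht30, ht31, ht32]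

lemma step (a b c d x y : ℝ) (pa : 0 ≤ a) (ma : a ≤ 1) (pb : 0 ≤ b) (mb : b ≤ 1)
    (pc : 0 ≤ c) (mc : c ≤ 1) (pd : 0 ≤ d) (md : d ≤ 1)
    (px : 0 ≤ x) (py : 0 ≤ y) (hxy : x ≤ y) :
    (a*b*c + a*b*d + a*c*d + b*c*d + (a*b + a*c + a*d + b*c + b*d + c*d - 2*(a*b*c*d)) * x) /
      (3 + (a*b*c*d + (a*b*c + a*b*d + a*c*d + b*c*d) * x)) ≤
    (a*b*c + a*b*d + a*c*d + b*c*d + (a*b + a*c + a*d + b*c + b*d + c*d - 2*(a*b*c*d)) * y) /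
      (3 + (a*b*c*d + (a*b*c + a*b*d + a*c*d + b*c*d) * y)) := by
  have hk := key a b c d pa (by linarith) pb (by linarith) pc (by linarith) pd (by linarith)
  have h4 : 0 ≤ a*b*c*d := by positivity
  have h3 : 0 ≤ a*b*c + a*b*d + a*c*d + b*c*d := by positivity
  have hdx : 0 < 3 + (a*b*c*d + (a*b*c + a*b*d + a*c*d + b*c*d) * x) := by nlinarith
  have hdy : 0 < 3 + (a*b*c*d + (a*b*c + a*b*d + a*c*d + b*c*d) * y) := by nlinarith
  rw [div_le_div_iff₀ hdx hdy]
  nlinarith [mul_nonneg (sub_nonneg.2 hxy) hk]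

/-- `fOut` is monotone nondecreasing in each variable on the cube `[0,1]⁵`. -/
theorem stmt_6 (f g : Fin 5 → ℝ)
    (hf : ∀ i, f i ∈ Set.Icc (0 : ℝ) 1) (hg : ∀ i, g i ∈ Set.Icc (0 : ℝ) 1)
    (hfg : ∀ i, f i ≤ g i) :
    fOut f ≤ fOut g := by
  obtain ⟨f0l, f0r⟩ := hf 0; obtain ⟨f1l, f1r⟩ := hf 1; obtain ⟨f2l, f2r⟩ := hf 2
  obtain ⟨f3l, f3r⟩ := hf 3; obtain ⟨f4l, f4r⟩ := hf 4
  obtain ⟨g0l, g0r⟩ := hg 0; obtain ⟨g1l, g1r⟩ := hg 1; obtain ⟨g2l, g2r⟩ := hg 2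
  obtain ⟨g3l, g3r⟩ := hg 3; obtain ⟨g4l, g4r⟩ := hg 4
  set h1 : Fin 5 → ℝ := ![g 0, f 1, f 2, f 3, f 4] with hh1
  set h2 : Fin 5 → ℝ := ![g 0, g 1, f 2, f 3, f 4] with hh2
  set h3 : Fin 5 → ℝ := ![g 0, g 1, g 2, f 3, f 4] with hh3
  set h4 : Fin 5 → ℝ := ![g 0, g 1, g 2, g 3, f 4] with hh4
  set h5 : Fin 5 → ℝ := ![g 0, g 1, g 2, g 3, g 4] with hh5
  have e5 : fOut g = fOut h5 := by
    congr 1; funext i; fin_cases i <;> simp [hh5]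
  have s0 : fOut f ≤ fOut h1 := by
    rw [fOut_apply, fOut_apply]
    simp only [hh1, Matrix.cons_val_zero, Matrix.cons_val_one, Matrix.head_cons,
      Matrix.cons_val_two, Matrix.tail_cons, Matrix.cons_val_three, Matrix.cons_val_four]
    convert step (f 1) (f 2) (f 3) (f 4) (f 0) (g 0) f1l f1r f2l f2r f3l f3r f4l f4r
      f0l g0l (hfg 0) using 2 <;> ring
  have s1 : fOut h1 ≤ fOut h2 := by
    rw [fOut_apply, fOut_apply]
    simp only [hh1, hh2, Matrix.cons_val_zero, Matrix.cons_val_one, Matrix.head_cons,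
      Matrix.cons_val_two, Matrix.tail_cons, Matrix.cons_val_three, Matrix.cons_val_four]
    convert step (g 0) (f 2) (f 3) (f 4) (f 1) (g 1) g0l g0r f2l f2r f3l f3r f4l f4r
      f1l g1l (hfg 1) using 2 <;> ring
  have s2 : fOut h2 ≤ fOut h3 := by
    rw [fOut_apply, fOut_apply]
    simp only [hh2, hh3, Matrix.cons_val_zero, Matrix.cons_val_one, Matrix.head_cons,
      Matrix.cons_val_two, Matrix.tail_cons, Matrix.cons_val_three, Matrix.cons_val_four]
    convert step (g 0) (g 1) (f 3) (f 4) (f 2) (g 2) g0l g0r g1l g1r f3l f3r f4l f4r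
      f2l g2l (hfg 2) using 2 <;> ring
  have s3 : fOut h3 ≤ fOut h4 := by
    rw [fOut_apply, fOut_apply]
    simp only [hh3, hh4, Matrix.cons_val_zero, Matrix.cons_val_one, Matrix.head_cons,
      Matrix.cons_val_two, Matrix.tail_cons, Matrix.cons_val_three, Matrix.cons_val_four]
    convert step (g 0) (g 1) (g 2) (f 4) (f 3) (g 3) g0l g0r g1l g1r g2l g2r f4l f4r
      f3l g3l (hfg 3) using 2 <;> ring
  have s4 : fOut h4 ≤ fOut h5 := by
    rw [fOut_apply, fOut_apply]
    simp only [hh4, hh5, Matrix.cons_val_zero, Matrix.cons_val_one, Matrix.head_cons,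
      Matrix.cons_val_two, Matrix.tail_cons, Matrix.cons_val_three, Matrix.cons_val_four]
    convert step (g 0) (g 1) (g 2) (g 3) (f 4) (g 4) g0l g0r g1l g1r g2l g2r g3l g3r
      f4l g4l (hfg 4) using 2 <;> ring
  rw [e5]
  linarith
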